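/- Let m and k be positive integers. There exists a constant C(m,k) (one may take C(m,k) = m · A(m,k) where A(m,k) = m · k · ∏_{i=2}^{2m+1}(ik+1)) such that in any k-geodetic graph, for any pair of asynchronously disjoint geodesics γ₁, γ₂ of the same length n, the number of indices i ∈ {0,...,n} with 1 ≤ d(γ₁(i), γ₂(i)) ≤ m is at most C(m,k). -/

import Mathlib

open SimpleGraph

section Helpers
variable {V : Type*} {X : SimpleGraph V}




/-- a chain of adjacent vertices -/
def IsChainFn (X : SimpleGraph V) (f : ℕ → V) (L : ℕ) : Prop :=
  ∀ i, i < L → X.Adj (f i) (f (i+1))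

def chainWalk : (f : ℕ → V) → (L : ℕ) → IsChainFn X f L → X.Walk (f 0) (f L)
  | _, 0, _ => Walk.nil
  | f, (L+1), h =>
      Walk.cons (h 0 (Nat.succ_pos L))
        (chainWalk (fun i => f (i+1)) L (fun i hi => h (i+1) (by omega)))

lemma chainWalk_length (f : ℕ → V) (L : ℕ) (h : IsChainFn X f L) :
    (chainWalk f L h).length = L := by
  induction L generalizing f with
  | zero => rfl
  | succ L ih => simp [chainWalk]; exact ih _ _

lemma chainWalk_getVert (f : ℕ → V) (L : ℕ) (h : IsChainFn X f L) (p : ℕ) (hp : p ≤ L) :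
    (chainWalk f L h).getVert p = f p := by
  induction L generalizing f p with
  | zero =>
    interval_cases p
    simp [chainWalk]
  | succ L ih =>
    cases p with
    | zero => simp [chainWalk]
    | succ p =>
      have := ih (fun i => f (i+1)) (fun i hi => h (i+1) (by omega)) p (by omega)
      simpa [chainWalk] using this

lemma chain_dist_le (hf : IsChainFn X f L) {a b : ℕ} (hab : a ≤ b) (hb : b ≤ L) :
    X.dist (f a) (f b) ≤ b - a := by
  have h : IsChainFn X (fun i => f (a + i)) (b - a) := by
    intro i hi
    have : a + i < L := by omega
    simpa [Nat.add_assoc] using hf (a + i) this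
  have := SimpleGraph.dist_le (chainWalk (fun i => f (a + i)) (b - a) h)
  rw [chainWalk_length] at this
  simpa [Nat.add_sub_cancel' hab] using this

lemma exists_geoChain (hc : X.Connected) (x y : V) :
    ∃ g : ℕ → V, g 0 = x ∧ g (X.dist x y) = y ∧ IsChainFn X g (X.dist x y) := by
  obtain ⟨p, hp⟩ := hc.exists_walk_length_eq_dist x y
  refine ⟨p.getVert, p.getVert_zero, ?_, ?_⟩
  · rw [← hp]; exact p.getVert_length
  · intro i hi
    exact p.adj_getVert_succ (by omega)

noncomputable def geoChain (hc : X.Connected) (x y : V) : ℕ → V :=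
  (exists_geoChain hc x y).choose

lemma geoChain_zero (hc : X.Connected) (x y : V) : geoChain hc x y 0 = x :=
  (exists_geoChain hc x y).choose_spec.1

lemma geoChain_last (hc : X.Connected) (x y : V) : geoChain hc x y (X.dist x y) = y :=
  (exists_geoChain hc x y).choose_spec.2.1

lemma geoChain_chain (hc : X.Connected) (x y : V) : IsChainFn X (geoChain hc x y) (X.dist x y) :=
  (exists_geoChain hc x y).choose_spec.2.2

/-- distance from a point of a geodesic chain to the far end -/
lemma geoChain_dist (hc : X.Connected) (x y : V) {o : ℕ} (ho : o ≤ X.dist x y) :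
    X.dist (geoChain hc x y o) y + o = X.dist x y := by
  have h1 : X.dist (geoChain hc x y o) (geoChain hc x y (X.dist x y)) ≤ X.dist x y - o :=
    chain_dist_le (geoChain_chain hc x y) ho le_rfl
  have h2 : X.dist (geoChain hc x y 0) (geoChain hc x y o) ≤ o :=
    chain_dist_le (geoChain_chain hc x y) (Nat.zero_le o) ho
  rw [geoChain_last] at h1
  rw [geoChain_zero] at h2
  have h3 : X.dist x y ≤ X.dist x (geoChain hc x y o) + X.dist (geoChain hc x y o) y :=
    hc.dist_triangle
  omega

/-- exact distances along a geodesic walk -/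
lemma geodesic_getVert_dist (hc : X.Connected) {u v : V} (p : X.Walk u v)
    (hp : p.length = X.dist u v) {a b : ℕ} (hab : a ≤ b) (hb : b ≤ p.length) :
    X.dist (p.getVert a) (p.getVert b) = b - a := by
  have hch : IsChainFn X p.getVert p.length := fun i hi => p.adj_getVert_succ hi
  have h1 : X.dist (p.getVert a) (p.getVert b) ≤ b - a := chain_dist_le hch hab hb
  have h2 : X.dist (p.getVert 0) (p.getVert a) ≤ a :=
    by simpa using chain_dist_le hch (Nat.zero_le a) (le_trans hab hb)
  have h3 : X.dist (p.getVert b) (p.getVert p.length) ≤ p.length - b := by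
    simpa using chain_dist_le hch hb le_rfl
  rw [p.getVert_zero] at h2
  rw [p.getVert_length] at h3
  have t1 : X.dist u v ≤ X.dist u (p.getVert a) + X.dist (p.getVert a) v := hc.dist_triangle
  have t2 : X.dist (p.getVert a) v ≤ X.dist (p.getVert a) (p.getVert b) + X.dist (p.getVert b) v :=
    hc.dist_triangle
  omega

lemma greedy_extract (good : ℕ → ℕ → Prop) (J : ℕ → ℕ) (w : ℕ) :
    ∀ (N : ℕ) (F : Finset ℕ), F.card ≤ N →
    (∀ a ∈ F, ∀ b ∈ F, a < b → good a b ∨ (J a < b ∧ b < J a + w)) →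
    ∃ G : Finset ℕ, G ⊆ F ∧ (∀ a ∈ G, ∀ b ∈ G, a < b → good a b) ∧
      F.card ≤ (1 + w) * G.card := by
  classical
  intro N
  induction N with
  | zero =>
    intro F hF _
    refine ⟨∅, Finset.empty_subset _, by simp, by omega⟩
  | succ N ih =>
    intro F hF hdich
    rcases F.eq_empty_or_nonempty with rfl | hne
    · exact ⟨∅, Finset.empty_subset _, by simp, by simp⟩
    · set r₁ := F.min' hne with hr₁
      have hr₁F : r₁ ∈ F := F.min'_mem hne
      set W : Finset ℕ := (F.erase r₁).filter (fun r => ¬ good r₁ r) with hW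
      have hWsub : W ⊆ Finset.Ioo (J r₁) (J r₁ + w) := by
        intro r hr
        rw [hW, Finset.mem_filter, Finset.mem_erase] at hr
        have hrF : r ∈ F := hr.1.2
        have hlt : r₁ < r := lt_of_le_of_ne (F.min'_le r hrF) (Ne.symm hr.1.1)
        rcases hdich r₁ hr₁F r hrF hlt with hg | hwin
        · exact absurd hg hr.2
        · exact Finset.mem_Ioo.2 hwin
      have hWcard : W.card ≤ w - 1 := by
        have := Finset.card_le_card hWsub
        rw [Nat.card_Ioo] at this
        omega
      set F' : Finset ℕ := (F.erase r₁) \ W with hF'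
      have hF'card : F'.card ≤ N := by
        have h1 : F' ⊆ F.erase r₁ := Finset.sdiff_subset
        have h2 := Finset.card_le_card h1
        have h3 : (F.erase r₁).card = F.card - 1 := Finset.card_erase_of_mem hr₁F
        have h4 : 1 ≤ F.card := Finset.card_pos.2 hne
        omega
      have hF'F : F' ⊆ F := fun x hx => Finset.erase_subset _ _ (Finset.sdiff_subset hx)
      obtain ⟨G', hG'sub, hG'good, hG'card⟩ := ih F' hF'card
        (fun a ha b hb hab => hdich a (hF'F ha) b (hF'F hb) hab)
      refine ⟨insert r₁ G', ?_, ?_, ?_⟩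
      · intro x hx
        rcases Finset.mem_insert.1 hx with rfl | hx
        · exact hr₁F
        · exact hF'F (hG'sub hx)
      · intro a ha b hb hab
        rcases Finset.mem_insert.1 ha with rfl | ha
        · -- a = r₁
          rcases Finset.mem_insert.1 hb with rfl | hb
          · omega
          · have hbF' : b ∈ F' := hG'sub hb
            rw [hF', Finset.mem_sdiff] at hbF'
            have : ¬ (¬ good r₁ b) := by
              intro hng
              exact hbF'.2 (by rw [hW, Finset.mem_filter]; exact ⟨hbF'.1, hng⟩)
            exact not_not.1 this
        · rcases Finset.mem_insert.1 hb with rfl | hb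
          · -- b = r₁ : impossible since a ∈ F', a > r₁
            have haF' := hG'sub ha
            rw [hF', Finset.mem_sdiff, Finset.mem_erase] at haF'
            have := F.min'_le a haF'.1.2
            omega
          · exact hG'good a ha b hb hab
      · have hr₁G' : r₁ ∉ G' := by
          intro hmem
          have := hG'sub hmem
          rw [hF', Finset.mem_sdiff, Finset.mem_erase] at this
          exact this.1.1 rfl
        rw [Finset.card_insert_of_notMem hr₁G']
        have hdisjWF' : Disjoint W F' := by
          rw [hF']
          exact Finset.disjoint_sdiff
        have hWe : W ⊆ F.erase r₁ := by
          rw [hW]; exact Finset.filter_subset _ _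
        have hunion : W ∪ F' = F.erase r₁ := by
          rw [hF', Finset.union_sdiff_of_subset hWe]
        have hcards : W.card + F'.card = (F.erase r₁).card := by
          rw [← hunion, Finset.card_union_of_disjoint hdisjWF']
        have h3 : (F.erase r₁).card = F.card - 1 := Finset.card_erase_of_mem hr₁F
        have h4 : 1 ≤ F.card := Finset.card_pos.2 hne
        have := hG'card
        ring_nf
        ring_nf at this
        omega

/-- the recursive bound -/
def BB (k d : ℕ) (ε : ℕ) : ℕ :=
  (1 + k * (1 + d)) * ∏ j ∈ Finset.Ioc 0 ε, (1 + k * (1 + (d - j)))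

lemma BB_succ (k d ε : ℕ) : BB k d (ε + 1) = BB k d ε * (1 + k * (1 + (d - (ε+1)))) := by
  rw [BB, BB, Finset.prod_Ioc_succ_top (Nat.zero_le _), mul_assoc]

lemma BB_pos (k d ε : ℕ) : 1 ≤ BB k d ε := by
  rw [BB]
  refine Nat.one_le_iff_ne_zero.2 (Nat.mul_ne_zero (by omega) ?_)
  refine Finset.prod_ne_zero_iff.2 (fun j _ => by omega)

lemma BB_rec (k d : ℕ) : ∀ ε : ℕ,
    1 + k * ((1 + d) * 1) + ∑ c ∈ Finset.Ioc 0 ε, k * ((1 + (d - c)) * BB k d (c - 1))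
      ≤ BB k d ε := by
  intro ε
  induction ε with
  | zero => simp [BB]
  | succ ε ih =>
    rw [Finset.sum_Ioc_succ_top (Nat.zero_le _), BB_succ]
    have h1 : k * ((1 + (d - (ε+1))) * BB k d (ε + 1 - 1)) =
        BB k d ε * (k * (1 + (d - (ε+1)))) := by
      simp only [Nat.add_sub_cancel]
      ring
    calc 1 + k * ((1 + d) * 1) +
          (∑ c ∈ Finset.Ioc 0 ε, k * ((1 + (d - c)) * BB k d (c - 1)) +
            k * ((1 + (d - (ε+1))) * BB k d (ε + 1 - 1)))
        = (1 + k * ((1 + d) * 1) + ∑ c ∈ Finset.Ioc 0 ε, k * ((1 + (d - c)) * BB k d (c - 1)))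
            + BB k d ε * (k * (1 + (d - (ε+1)))) := by rw [h1]; ring
      _ ≤ BB k d ε + BB k d ε * (k * (1 + (d - (ε+1)))) := by
            exact Nat.add_le_add_right ih _
      _ = BB k d ε * (1 + k * (1 + (d - (ε+1)))) := by ring

lemma BB_final (k d m : ℕ) (hd1 : 1 ≤ d) (hdm : d ≤ m) :
    BB k d (2*d) ≤ (1+k)^(m+1) * ∏ i ∈ Finset.Ioc 1 (m+1), (1 + k * i) := by
  have step1 : BB k d (2*d) ≤ (1 + k * (1 + m)) * ∏ j ∈ Finset.Ioc 0 (2*m), (1 + k * (1 + (m - j))) := by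
    rw [BB]
    refine Nat.mul_le_mul (Nat.add_le_add_left (Nat.mul_le_mul_left k (by omega)) 1) ?_
    calc ∏ j ∈ Finset.Ioc 0 (2*d), (1 + k * (1 + (d - j)))
        ≤ ∏ j ∈ Finset.Ioc 0 (2*d), (1 + k * (1 + (m - j))) := by
          refine Finset.prod_le_prod' (fun j _ => ?_)
          have : d - j ≤ m - j := Nat.sub_le_sub_right hdm j
          exact Nat.add_le_add_left (Nat.mul_le_mul_left k (Nat.add_le_add_left this 1)) 1
      _ ≤ ∏ j ∈ Finset.Ioc 0 (2*m), (1 + k * (1 + (m - j))) := by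
          refine Finset.prod_le_prod_of_subset_of_one_le' ?_ (fun j _ _ => by omega)
          exact Finset.Ioc_subset_Ioc le_rfl (by omega)
  have split : ∏ j ∈ Finset.Ioc 0 (2*m), (1 + k * (1 + (m - j)))
      = (∏ j ∈ Finset.Ioc 0 m, (1 + k * (1 + (m - j)))) *
        ∏ j ∈ Finset.Ioc m (2*m), (1 + k * (1 + (m - j))) := by
    rw [Finset.prod_Ioc_consecutive _ (Nat.zero_le m) (by omega)]
  have right : ∏ j ∈ Finset.Ioc m (2*m), (1 + k * (1 + (m - j))) = (1+k)^m := by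
    have : ∀ j ∈ Finset.Ioc m (2*m), (1 + k * (1 + (m - j))) = 1 + k := by
      intro j hj
      rw [Finset.mem_Ioc] at hj
      have h0 : m - j = 0 := Nat.sub_eq_zero_of_le (le_of_lt hj.1)
      rw [h0, Nat.add_zero, Nat.mul_one]
    rw [Finset.prod_congr rfl this, Finset.prod_const, Nat.card_Ioc]
    congr 1
    omega
  have left : ∏ j ∈ Finset.Ioc 0 m, (1 + k * (1 + (m - j))) = ∏ i ∈ Finset.Ioc 0 m, (1 + k * i) := by
    refine Finset.prod_nbij' (fun j => m + 1 - j) (fun i => m + 1 - i) ?_ ?_ ?_ ?_ ?_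
    · intro j hj
      simp only [Finset.mem_Ioc] at hj ⊢
      omega
    · intro i hi
      simp only [Finset.mem_Ioc] at hi ⊢
      omega
    · intro j hj
      simp only [Finset.mem_Ioc] at hj
      show m + 1 - (m + 1 - j) = j
      omega
    · intro i hi
      simp only [Finset.mem_Ioc] at hi
      show m + 1 - (m + 1 - i) = i
      omega
    · intro j hj
      simp only [Finset.mem_Ioc] at hj
      show 1 + k * (1 + (m - j)) = 1 + k * (m + 1 - j)
      congr 1
      congr 1
      omega
  have top : (1 + k * (1 + m)) * ∏ i ∈ Finset.Ioc 0 m, (1 + k * i)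
      = ∏ i ∈ Finset.Ioc 0 (m+1), (1 + k * i) := by
    rw [Finset.prod_Ioc_succ_top (Nat.zero_le _), Nat.add_comm 1 m, mul_comm]
  have first : ∏ i ∈ Finset.Ioc 0 (m+1), (1 + k * i)
      = (1+k) * ∏ i ∈ Finset.Ioc 1 (m+1), (1 + k * i) := by
    rw [← Finset.prod_Ioc_consecutive _ (Nat.zero_le 1) (by omega : 1 ≤ m+1)]
    rw [Nat.Ioc_succ_singleton, Finset.prod_singleton]
    congr 2
    omega
  calc BB k d (2*d) ≤ (1 + k * (1 + m)) * ∏ j ∈ Finset.Ioc 0 (2*m), (1 + k * (1 + (m - j))) := step1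
    _ = ((1 + k * (1 + m)) * ∏ i ∈ Finset.Ioc 0 m, (1 + k * i)) * (1+k)^m := by
        rw [split, right, left]; ring
    _ = ((1+k) * ∏ i ∈ Finset.Ioc 1 (m+1), (1 + k * i)) * (1+k)^m := by rw [top, first]
    _ = (1+k)^(m+1) * ∏ i ∈ Finset.Ioc 1 (m+1), (1 + k * i) := by ring

lemma Phi_le (k m : ℕ) (hk : 1 ≤ k) (hm : 1 ≤ m) :
    (1+k)^(m+1) * ∏ i ∈ Finset.Ioc 1 (m+1), (1 + k * i)
      ≤ m * (k * ∏ i ∈ Finset.Icc 2 (2*m+1), (i * k + 1)) := by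
  have hIcc : Finset.Icc 2 (2*m+1) = Finset.Ioc 1 (2*m+1) := by
    ext x
    simp only [Finset.mem_Icc, Finset.mem_Ioc]
    omega
  have hsplit : ∏ i ∈ Finset.Ioc 1 (2*m+1), (i * k + 1)
      = (∏ i ∈ Finset.Ioc 1 (m+1), (i * k + 1)) * ∏ i ∈ Finset.Ioc (m+1) (2*m+1), (i * k + 1) := by
    rw [Finset.prod_Ioc_consecutive _ (by omega : 1 ≤ m+1) (by omega : m+1 ≤ 2*m+1)]
  have hform : ∏ i ∈ Finset.Ioc 1 (m+1), (1 + k * i) = ∏ i ∈ Finset.Ioc 1 (m+1), (i * k + 1) := by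
    refine Finset.prod_congr rfl (fun i _ => by ring)
  have hP2 : (2*(k+1))^m ≤ ∏ i ∈ Finset.Ioc (m+1) (2*m+1), (i * k + 1) := by
    have hcard : (Finset.Ioc (m+1) (2*m+1)).card = m := by rw [Nat.card_Ioc]; omega
    calc (2*(k+1))^m = ∏ _i ∈ Finset.Ioc (m+1) (2*m+1), (2*(k+1)) := by
          rw [Finset.prod_const, hcard]
      _ ≤ ∏ i ∈ Finset.Ioc (m+1) (2*m+1), (i * k + 1) := by
          refine Finset.prod_le_prod' (fun i hi => ?_)
          rw [Finset.mem_Ioc] at hi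
          have h1 : m + 2 ≤ i := by omega
          have : (m+2) * k ≤ i * k := Nat.mul_le_mul_right k h1
          nlinarith
  have hkey : (1+k)^(m+1) ≤ m * k * ∏ i ∈ Finset.Ioc (m+1) (2*m+1), (i * k + 1) := by
    have h2m : 2 ≤ 2^m := by
      calc (2:ℕ) = 2^1 := by norm_num
        _ ≤ 2^m := Nat.pow_le_pow_right (by norm_num) hm
    have h1 : (1+k)^(m+1) = (1+k) * (1+k)^m := by ring
    have h2 : (2*(k+1))^m = 2^m * (k+1)^m := by rw [mul_pow]
    calc (1+k)^(m+1) = (1+k) * (1+k)^m := h1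
      _ ≤ (m * k * 2^m) * (1+k)^m := by
          refine Nat.mul_le_mul_right _ ?_
          calc 1 + k ≤ 2 * k := by omega
            _ ≤ 2^m * k := Nat.mul_le_mul_right k h2m
            _ ≤ (m * 2^m) * k := by
                refine Nat.mul_le_mul_right k ?_
                calc 2^m = 1 * 2^m := (one_mul _).symm
                  _ ≤ m * 2^m := Nat.mul_le_mul_right _ hm
            _ = m * k * 2^m := by ring
      _ = m * k * (2^m * (k+1)^m) := by ring_nf
      _ = m * k * (2*(k+1))^m := by rw [h2]
      _ ≤ m * k * ∏ i ∈ Finset.Ioc (m+1) (2*m+1), (i * k + 1) := Nat.mul_le_mul_left _ hP2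
  calc (1+k)^(m+1) * ∏ i ∈ Finset.Ioc 1 (m+1), (1 + k * i)
      ≤ (m * k * ∏ i ∈ Finset.Ioc (m+1) (2*m+1), (i * k + 1)) * ∏ i ∈ Finset.Ioc 1 (m+1), (i * k + 1) := by
        rw [hform]
        exact Nat.mul_le_mul_right _ hkey
    _ = m * (k * ∏ i ∈ Finset.Icc 2 (2*m+1), (i * k + 1)) := by
        rw [hIcc, hsplit]; ring

lemma A_lemma {k : ℕ}
    (hconn : X.Connected)
    (hgeod : ∀ (u v : V) (s : Finset (X.Walk u v)), (∀ p ∈ s, p.length = X.dist u v) → s.card ≤ k)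
    (γ₁ γ₂ : ℕ → V) (n d : ℕ) (hd : 1 ≤ d)
    (hch₁ : IsChainFn X γ₁ n) (hch₂ : IsChainFn X γ₂ n)
    (hg₂ : ∀ i j, i ≤ j → j ≤ n → X.dist (γ₂ i) (γ₂ j) = j - i)
    (hdisj : ∀ i j, i ≤ n → j ≤ n → i ≠ j → γ₁ i ≠ γ₂ j)
    (c s' : ℕ) (hs' : s' ≤ n) (β : ℕ)
    (hβ : ∀ F : Finset ℕ, (∀ t ∈ F, t ≤ n ∧ X.dist (γ₁ t) (γ₂ t) = d) →
        (∀ a ∈ F, ∀ b ∈ F, a < b → (b - a) + d + 1 ≤ X.dist (γ₁ a) (γ₂ b) + c) → F.card ≤ β)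
    (T : Finset ℕ)
    (hT : ∀ t ∈ T, (t ≤ n ∧ X.dist (γ₁ t) (γ₂ t) = d) ∧ t < s' ∧
        X.dist (γ₁ t) (γ₂ s') + c = (s' - t) + d) :
    T.card ≤ k * ((1 + (d - c)) * β) := by
  classical
  rcases T.eq_empty_or_nonempty with rfl | hne
  · simp
  have ht₀T : T.min' hne ∈ T := T.min'_mem hne
  set t₀ := T.min' hne with ht₀def
  obtain ⟨⟨ht₀n, ht₀d⟩, ht₀s, ht₀anch⟩ := hT t₀ ht₀T
  set L := X.dist (γ₁ t₀) (γ₂ s') with hLdef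
  -- the jump index
  set J : ℕ → ℕ := fun r =>
    sInf {j | r ≤ j ∧ j ≤ s' ∧ X.dist (γ₁ r) (γ₂ j) + c = (j - r) + d} with hJdef
  have hJmem : ∀ r ∈ T, r ≤ J r ∧ J r ≤ s' ∧
      X.dist (γ₁ r) (γ₂ (J r)) + c = (J r - r) + d := by
    intro r hr
    obtain ⟨⟨hrn, hrd⟩, hrs, hranch⟩ := hT r hr
    have hne' : {j | r ≤ j ∧ j ≤ s' ∧ X.dist (γ₁ r) (γ₂ j) + c = (j - r) + d}.Nonempty :=
      ⟨s', le_of_lt hrs, le_rfl, hranch⟩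
    have := Nat.sInf_mem hne'
    simpa only [hJdef, Set.mem_setOf_eq] using this
  have hJle : ∀ r j, r ≤ j → j ≤ s' → X.dist (γ₁ r) (γ₂ j) + c = (j - r) + d → J r ≤ j := by
    intro r j h1 h2 h3
    simp only [hJdef]
    exact Nat.sInf_le ⟨h1, h2, h3⟩
  -- the geodesic jump chains
  set g : ℕ → ℕ → V := fun r => geoChain hconn (γ₁ r) (γ₂ (J r)) with hgdef
  have hg0 : ∀ r, g r 0 = γ₁ r := fun r => geoChain_zero hconn _ _
  have hglast : ∀ r, g r (X.dist (γ₁ r) (γ₂ (J r))) = γ₂ (J r) :=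
    fun r => geoChain_last hconn _ _
  have hgchain : ∀ r, IsChainFn X (g r) (X.dist (γ₁ r) (γ₂ (J r))) :=
    fun r => geoChain_chain hconn _ _
  have hgdist : ∀ r o, o ≤ X.dist (γ₁ r) (γ₂ (J r)) →
      X.dist (g r o) (γ₂ (J r)) + o = X.dist (γ₁ r) (γ₂ (J r)) :=
    fun r o ho => geoChain_dist hconn _ _ ho
  -- the rerouted chains
  set Θ : ℕ → ℕ → V := fun r p =>
    if p < r - t₀ then γ₁ (t₀ + p)
    else if p ≤ (r - t₀) + X.dist (γ₁ r) (γ₂ (J r)) then g r (p - (r - t₀))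
    else γ₂ (J r + (p - ((r - t₀) + X.dist (γ₁ r) (γ₂ (J r))))) with hΘdef
  have hΘpre : ∀ r p, p < r - t₀ → Θ r p = γ₁ (t₀ + p) := by
    intro r p h
    simp only [hΘdef]
    rw [if_pos h]
  have hΘmid : ∀ r p, r - t₀ ≤ p → p ≤ (r - t₀) + X.dist (γ₁ r) (γ₂ (J r)) →
      Θ r p = g r (p - (r - t₀)) := by
    intro r p h1 h2
    simp only [hΘdef]
    rw [if_neg (by omega), if_pos h2]
  have hΘtail : ∀ r p, (r - t₀) + X.dist (γ₁ r) (γ₂ (J r)) < p →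
      Θ r p = γ₂ (J r + (p - ((r - t₀) + X.dist (γ₁ r) (γ₂ (J r))))) := by
    intro r p h
    simp only [hΘdef]
    rw [if_neg (by omega), if_neg (by omega)]
  -- basic index facts for r ∈ T
  have hfacts : ∀ r ∈ T, t₀ ≤ r ∧ r < s' ∧ r ≤ n ∧ X.dist (γ₁ r) (γ₂ r) = d ∧
      (r - t₀) + X.dist (γ₁ r) (γ₂ (J r)) + (s' - J r) = L := by
    intro r hr
    obtain ⟨⟨hrn, hrd⟩, hrs, hranch⟩ := hT r hr
    obtain ⟨hJ1, hJ2, hJ3⟩ := hJmem r hr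
    have h1 : t₀ ≤ r := T.min'_le r hr
    exact ⟨h1, hrs, hrn, hrd, by omega⟩
  -- the chains Θ r are walks from γ₁ t₀ to γ₂ s' of length L
  have hprops : ∀ r ∈ T, IsChainFn X (Θ r) L ∧ Θ r 0 = γ₁ t₀ ∧ Θ r L = γ₂ s' := by
    intro r hr
    obtain ⟨h1, h2, h3, h4, h5⟩ := hfacts r hr
    obtain ⟨hJ1, hJ2, hJ3⟩ := hJmem r hr
    refine ⟨?_, ?_, ?_⟩
    · intro p hp
      by_cases c1 : p + 1 < r - t₀
      · rw [hΘpre r p (by omega), hΘpre r (p+1) c1]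
        have he : t₀ + (p + 1) = (t₀ + p) + 1 := by omega
        rw [he]
        exact hch₁ (t₀ + p) (by omega)
      · by_cases c2 : p + 1 = r - t₀
        · rw [hΘpre r p (by omega), hΘmid r (p+1) (by omega) (by omega)]
          have he : p + 1 - (r - t₀) = 0 := by omega
          rw [he, hg0]
          have he2 : r = (t₀ + p) + 1 := by omega
          rw [he2]
          exact hch₁ (t₀ + p) (by omega)
        · by_cases c3 : p + 1 ≤ (r - t₀) + X.dist (γ₁ r) (γ₂ (J r))
          · rw [hΘmid r p (by omega) (by omega), hΘmid r (p+1) (by omega) c3]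
            have he : p + 1 - (r - t₀) = (p - (r - t₀)) + 1 := by omega
            rw [he]
            exact hgchain r (p - (r - t₀)) (by omega)
          · by_cases c4 : p ≤ (r - t₀) + X.dist (γ₁ r) (γ₂ (J r))
            · -- p = boundary
              have hpe : p = (r - t₀) + X.dist (γ₁ r) (γ₂ (J r)) := by omega
              rw [hΘmid r p (by omega) c4, hΘtail r (p+1) (by omega)]
              have he : p - (r - t₀) = X.dist (γ₁ r) (γ₂ (J r)) := by omega
              rw [he, hglast]
              have he2 : J r + (p + 1 - ((r - t₀) + X.dist (γ₁ r) (γ₂ (J r)))) = J r + 1 := by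
                omega
              rw [he2]
              exact hch₂ (J r) (by omega)
            · rw [hΘtail r p (by omega), hΘtail r (p+1) (by omega)]
              have he : J r + (p + 1 - ((r - t₀) + X.dist (γ₁ r) (γ₂ (J r))))
                  = (J r + (p - ((r - t₀) + X.dist (γ₁ r) (γ₂ (J r))))) + 1 := by omega
              rw [he]
              exact hch₂ _ (by omega)
    · by_cases c1 : 0 < r - t₀
      · rw [hΘpre r 0 c1, Nat.add_zero]
      · rw [hΘmid r 0 (by omega) (by omega)]
        have he : (0:ℕ) - (r - t₀) = 0 := by omega
        rw [he, hg0]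
        have : r = t₀ := by omega
        rw [this]
    · by_cases c1 : L ≤ (r - t₀) + X.dist (γ₁ r) (γ₂ (J r))
      · rw [hΘmid r L (by omega) c1]
        have hJs : J r = s' := by omega
        have he : L - (r - t₀) = X.dist (γ₁ r) (γ₂ (J r)) := by omega
        rw [he, hglast, hJs]
      · rw [hΘtail r L (by omega)]
        have he : J r + (L - ((r - t₀) + X.dist (γ₁ r) (γ₂ (J r)))) = s' := by omega
        rw [he]
  -- the walks
  have hw₀ : ∃ w : X.Walk (γ₁ t₀) (γ₂ s'), w.length = X.dist (γ₁ t₀) (γ₂ s') :=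
    hconn.exists_walk_length_eq_dist _ _
  set Wθ : ℕ → X.Walk (γ₁ t₀) (γ₂ s') := fun r =>
    if h : IsChainFn X (Θ r) L ∧ Θ r 0 = γ₁ t₀ ∧ Θ r L = γ₂ s' then
      ((chainWalk (Θ r) L h.1).copy h.2.1 h.2.2) else hw₀.choose with hWdef
  have hWlen : ∀ r, (Wθ r).length = X.dist (γ₁ t₀) (γ₂ s') := by
    intro r
    simp only [hWdef]
    split
    · rw [Walk.length_copy, chainWalk_length]
    · exact hw₀.choose_spec
  have himg : (T.image Wθ).card ≤ k := by
    refine hgeod _ _ _ ?_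
    intro w hw
    obtain ⟨r, _, rfl⟩ := Finset.mem_image.1 hw
    exact hWlen r
  -- walk equality gives pointwise equality of the chains
  have hΘeq : ∀ a ∈ T, ∀ b ∈ T, Wθ a = Wθ b → ∀ p, p ≤ L → Θ a p = Θ b p := by
    intro a ha b hb heq p hp
    have hpa := hprops a ha
    have hpb := hprops b hb
    simp only [hWdef, dif_pos hpa, dif_pos hpb] at heq
    have := congrArg (fun w => w.getVert p) heq
    simpa only [Walk.getVert_copy, chainWalk_getVert _ _ _ p hp] using this
  -- the key dichotomy
  have hdich : ∀ a ∈ T, ∀ b ∈ T, a < b → Wθ a = Wθ b →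
      ((b - a) + d + 1 ≤ X.dist (γ₁ a) (γ₂ b) + c ∨ (J a < b ∧ b + c < J a + d)) := by
    intro a haT b hbT hab heq
    obtain ⟨ha1, ha2, ha3, ha4, ha5⟩ := hfacts a haT
    obtain ⟨hb1, hb2, hb3, hb4, hb5⟩ := hfacts b hbT
    obtain ⟨hJa1, hJa2, hJa3⟩ := hJmem a haT
    obtain ⟨hJb1, hJb2, hJb3⟩ := hJmem b hbT
    obtain ⟨⟨_, _⟩, _, haanch⟩ := hT a haT
    obtain ⟨⟨_, _⟩, _, hbanch⟩ := hT b hbT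
    have hpb : b - t₀ ≤ L := by omega
    have hv1 : Θ b (b - t₀) = γ₁ b := by
      rw [hΘmid b (b - t₀) le_rfl (by omega), Nat.sub_self, hg0]
    have hvb : γ₁ b = Θ a (b - t₀) := by
      rw [← hv1]
      exact (hΘeq a haT b hbT heq (b - t₀) hpb).symm
    by_cases hcase : b - t₀ ≤ (a - t₀) + X.dist (γ₁ a) (γ₂ (J a))
    · -- γ₁ b lies on the jump geodesic of a
      rw [hΘmid a (b - t₀) (by omega) hcase] at hvb
      have hoval : b - t₀ - (a - t₀) = b - a := by omega
      rw [hoval] at hvb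
      by_cases hoe : b - a = X.dist (γ₁ a) (γ₂ (J a))
      · exfalso
        rw [hoe, hglast] at hvb
        by_cases hJab : J a = b
        · rw [hJab] at hvb
          rw [hvb, SimpleGraph.dist_self] at hb4
          omega
        · exact hdisj b (J a) hb3 (by omega) (fun hh => hJab hh.symm) hvb
      · have holt : b - a < X.dist (γ₁ a) (γ₂ (J a)) := by omega
        have hdistb : X.dist (γ₁ b) (γ₂ (J a)) + (b - a) = X.dist (γ₁ a) (γ₂ (J a)) := by
          rw [hvb]
          exact hgdist a (b - a) (by omega)
        by_cases hbJ : b ≤ J a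
        · left
          have hmemJ : X.dist (γ₁ b) (γ₂ (J a)) + c = (J a - b) + d := by omega
          have hJble : J b ≤ J a := hJle b (J a) hbJ hJa2 hmemJ
          have hbJb : b < J b := by
            rcases Nat.lt_or_ge b (J b) with h | h
            · exact h
            · exfalso
              have hJbb : J b = b := by omega
              rw [hJbb, hb4] at hJb3
              have hc0 : c = 0 := by omega
              have : J a ≤ a := hJle a a le_rfl (by omega) (by rw [ha4]; omega)
              omega
          have hnot : ¬ (X.dist (γ₁ a) (γ₂ b) + c = (b - a) + d) := by
            intro hcon
            have := hJle a b (by omega) (by omega) hcon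
            omega
          have hfact : (b - a) + d ≤ X.dist (γ₁ a) (γ₂ b) + c := by
            have htri : X.dist (γ₁ a) (γ₂ s') ≤ X.dist (γ₁ a) (γ₂ b) + X.dist (γ₂ b) (γ₂ s') :=
              hconn.dist_triangle
            have hgbs : X.dist (γ₂ b) (γ₂ s') = s' - b := hg₂ b s' (by omega) hs'
            omega
          omega
        · right
          omega
    · exfalso
      rw [hΘtail a (b - t₀) (by omega)] at hvb
      have hq : J a + (b - t₀ - ((a - t₀) + X.dist (γ₁ a) (γ₂ (J a)))) ≤ s' := by omega
      by_cases hqb : J a + (b - t₀ - ((a - t₀) + X.dist (γ₁ a) (γ₂ (J a)))) = b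
      · rw [hqb] at hvb
        rw [hvb, SimpleGraph.dist_self] at hb4
        omega
      · exact hdisj b _ hb3 (by omega) (fun hh => hqb hh.symm) hvb
  -- fibers are small
  have hfiber : ∀ w ∈ T.image Wθ, (T.filter (fun x => Wθ x = w)).card ≤ (1 + (d - c)) * β := by
    intro w hw
    have hFT : T.filter (fun x => Wθ x = w) ⊆ T := Finset.filter_subset _ _
    have hdichF : ∀ a ∈ T.filter (fun x => Wθ x = w), ∀ b ∈ T.filter (fun x => Wθ x = w),
        a < b → ((b - a) + d + 1 ≤ X.dist (γ₁ a) (γ₂ b) + c) ∨ (J a < b ∧ b < J a + (d - c)) := by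
      intro a ha b hb hab
      rw [Finset.mem_filter] at ha hb
      have heq : Wθ a = Wθ b := by rw [ha.2, hb.2]
      rcases hdich a ha.1 b hb.1 hab heq with h | h
      · exact Or.inl h
      · exact Or.inr ⟨h.1, by omega⟩
    obtain ⟨G, hGF, hGgood, hGcard⟩ :=
      greedy_extract (fun a b => (b - a) + d + 1 ≤ X.dist (γ₁ a) (γ₂ b) + c) J (d - c)
        (T.filter (fun x => Wθ x = w)).card (T.filter (fun x => Wθ x = w)) le_rfl hdichF
    have hGβ : G.card ≤ β := by
      refine hβ G (fun t ht => (hT t (hFT (hGF ht))).1) hGgood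
    calc (T.filter (fun x => Wθ x = w)).card ≤ (1 + (d - c)) * G.card := hGcard
      _ ≤ (1 + (d - c)) * β := Nat.mul_le_mul_left _ hGβ
  have := Finset.card_le_mul_card_image (f := Wθ) T ((1 + (d - c)) * β) hfiber
  calc T.card ≤ ((1 + (d - c)) * β) * (T.image Wθ).card := this
    _ ≤ ((1 + (d - c)) * β) * k := Nat.mul_le_mul_left _ himg
    _ = k * ((1 + (d - c)) * β) := Nat.mul_comm _ _

lemma P_lemma {k : ℕ}
    (hconn : X.Connected)
    (hgeod : ∀ (u v : V) (s : Finset (X.Walk u v)), (∀ p ∈ s, p.length = X.dist u v) → s.card ≤ k)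
    (γ₁ γ₂ : ℕ → V) (n d : ℕ) (hd : 1 ≤ d)
    (hch₁ : IsChainFn X γ₁ n) (hch₂ : IsChainFn X γ₂ n)
    (hg₂ : ∀ i j, i ≤ j → j ≤ n → X.dist (γ₂ i) (γ₂ j) = j - i)
    (hdisj : ∀ i j, i ≤ n → j ≤ n → i ≠ j → γ₁ i ≠ γ₂ j) :
    ∀ ε (T : Finset ℕ), (∀ t ∈ T, t ≤ n ∧ X.dist (γ₁ t) (γ₂ t) = d) →
    (∀ a ∈ T, ∀ b ∈ T, a < b → (b - a) + d ≤ X.dist (γ₁ a) (γ₂ b) + ε) →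
    T.card ≤ BB k d ε := by
  classical
  intro ε
  induction ε using Nat.strong_induction_on with
  | _ ε IH =>
  intro T hCl hPair
  rcases T.eq_empty_or_nonempty with rfl | hne
  · have : 1 ≤ BB k d ε := by
      rw [BB]
      refine Nat.one_le_iff_ne_zero.2 (Nat.mul_ne_zero (by omega) ?_)
      exact Finset.prod_ne_zero_iff.2 (fun j _ => by omega)
    simpa using Nat.le_trans (by simp) this
  have hsT : T.max' hne ∈ T := T.max'_mem hne
  set s₁ := T.max' hne with hs₁def
  obtain ⟨hs₁n, hs₁d⟩ := hCl s₁ hsT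
  -- filter pieces
  set f : ℕ → Finset ℕ := fun c =>
    (T.erase s₁).filter (fun t => X.dist (γ₁ t) (γ₂ s₁) + c = (s₁ - t) + d) with hfdef
  have hcover : T.erase s₁ ⊆ (Finset.range (ε+1)).biUnion f := by
    intro t ht
    rw [Finset.mem_erase] at ht
    obtain ⟨htn, htd⟩ := hCl t ht.2
    have hts : t < s₁ := lt_of_le_of_ne (T.le_max' t ht.2) ht.1
    have hub : X.dist (γ₁ t) (γ₂ s₁) ≤ d + (s₁ - t) := by
      have htri : X.dist (γ₁ t) (γ₂ s₁) ≤ X.dist (γ₁ t) (γ₂ t) + X.dist (γ₂ t) (γ₂ s₁) :=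
        hconn.dist_triangle
      have := hg₂ t s₁ (by omega) hs₁n
      omega
    have hlb := hPair t ht.2 s₁ hsT hts
    refine Finset.mem_biUnion.2 ⟨(s₁ - t) + d - X.dist (γ₁ t) (γ₂ s₁), ?_, ?_⟩
    · rw [Finset.mem_range]
      omega
    · rw [hfdef, Finset.mem_filter]
      exact ⟨Finset.mem_erase.2 ht, by omega⟩
  have hsplitsum : ∀ F : ℕ → ℕ, ∑ c ∈ Finset.range (ε+1), F c
      = F 0 + ∑ c ∈ Finset.Ioc 0 ε, F c := by
    intro F
    have : Finset.range (ε+1) = insert 0 (Finset.Ioc 0 ε) := by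
      ext x
      simp only [Finset.mem_range, Finset.mem_insert, Finset.mem_Ioc]
      omega
    rw [this, Finset.sum_insert (by simp)]
  -- bound each piece
  have hpiece0 : (f 0).card ≤ k * ((1 + (d - 0)) * 1) := by
    refine A_lemma hconn hgeod γ₁ γ₂ n d hd hch₁ hch₂ hg₂ hdisj 0 s₁ hs₁n 1 ?_ (f 0) ?_
    · intro F hFcl hFgood
      by_contra hcon
      push_neg at hcon
      obtain ⟨a, ha, b, hb, hab⟩ := Finset.one_lt_card.1 hcon
      rcases Nat.lt_or_ge a b with h | h
      · have hgood := hFgood a ha b hb h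
        obtain ⟨hbn, _⟩ := hFcl b hb
        obtain ⟨han, had⟩ := hFcl a ha
        have htri : X.dist (γ₁ a) (γ₂ b) ≤ X.dist (γ₁ a) (γ₂ a) + X.dist (γ₂ a) (γ₂ b) :=
          hconn.dist_triangle
        have := hg₂ a b (by omega) hbn
        omega
      · have hba : b < a := by omega
        have hgood := hFgood b hb a ha hba
        obtain ⟨han, _⟩ := hFcl a ha
        obtain ⟨hbn, hbd⟩ := hFcl b hb
        have htri : X.dist (γ₁ b) (γ₂ a) ≤ X.dist (γ₁ b) (γ₂ b) + X.dist (γ₂ b) (γ₂ a) :=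
          hconn.dist_triangle
        have := hg₂ b a (by omega) han
        omega
    · intro t ht
      rw [hfdef, Finset.mem_filter, Finset.mem_erase] at ht
      have hts : t < s₁ := lt_of_le_of_ne (T.le_max' t ht.1.2) ht.1.1
      exact ⟨hCl t ht.1.2, hts, ht.2⟩
  have hpiece : ∀ c ∈ Finset.Ioc 0 ε, (f c).card ≤ k * ((1 + (d - c)) * BB k d (c - 1)) := by
    intro c hc
    rw [Finset.mem_Ioc] at hc
    refine A_lemma hconn hgeod γ₁ γ₂ n d hd hch₁ hch₂ hg₂ hdisj c s₁ hs₁n (BB k d (c-1)) ?_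
      (f c) ?_
    · intro F hFcl hFgood
      refine IH (c-1) (by omega) F hFcl ?_
      intro a ha b hb hab
      have := hFgood a ha b hb hab
      omega
    · intro t ht
      rw [hfdef, Finset.mem_filter, Finset.mem_erase] at ht
      have hts : t < s₁ := lt_of_le_of_ne (T.le_max' t ht.1.2) ht.1.1
      exact ⟨hCl t ht.1.2, hts, ht.2⟩
  -- assemble
  have hcard1 : T.card = (T.erase s₁).card + 1 := by
    rw [Finset.card_erase_of_mem hsT]
    have : 1 ≤ T.card := Finset.card_pos.2 hne
    omega
  have hcard2 : (T.erase s₁).card ≤ ∑ c ∈ Finset.range (ε+1), (f c).card :=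
    le_trans (Finset.card_le_card hcover) (Finset.card_biUnion_le)
  have hsum : ∑ c ∈ Finset.range (ε+1), (f c).card
      ≤ k * ((1 + (d - 0)) * 1) + ∑ c ∈ Finset.Ioc 0 ε, k * ((1 + (d - c)) * BB k d (c - 1)) := by
    rw [hsplitsum (fun c => (f c).card)]
    exact Nat.add_le_add hpiece0 (Finset.sum_le_sum hpiece)
  have hfin := BB_rec k d ε
  have : k * ((1 + (d - 0)) * 1) = k * ((1 + d) * 1) := by norm_num
  omega

end Helpers

/-- A connected simple graph is `k`-geodetic if between any pair of vertices there are
at most `k` geodesics (walks of minimal length between their endpoints). -/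
def IsKGeodetic {V : Type*} (X : SimpleGraph V) (k : ℕ) : Prop :=
  X.Connected ∧ ∀ (u v : V) (s : Finset (X.Walk u v)),
    (∀ p ∈ s, p.length = X.dist u v) → s.card ≤ k

/-- With `C(m,k) = m · A(m,k)` where
`A(m,k) = m · k · ∏_{i=2}^{2m+1} (i k + 1)`, in any `k`-geodetic graph, for any pair of
asynchronously disjoint geodesics `p₁, p₂` of the same length `n`, the number of indices
`i ∈ {0, …, n}` at which the two geodesics are `m`-close (i.e. `1 ≤ d(p₁(i), p₂(i)) ≤ m`)
is at most `C(m,k)`. -/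
theorem close_count_bound {V : Type*} (X : SimpleGraph V) (m k : ℕ)
    (hm : 0 < m) (hk : 0 < k) (hX : IsKGeodetic X k)
    {u₁ v₁ u₂ v₂ : V} (n : ℕ)
    (p₁ : X.Walk u₁ v₁) (p₂ : X.Walk u₂ v₂)
    (hn₁ : p₁.length = n) (hn₂ : p₂.length = n)
    (hgeo₁ : p₁.length = X.dist u₁ v₁) (hgeo₂ : p₂.length = X.dist u₂ v₂)
    (hdisj : ∀ i j, i ≤ n → j ≤ n → i ≠ j → p₁.getVert i ≠ p₂.getVert j) :
    ((Finset.range (n + 1)).filter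
        (fun i => 1 ≤ X.dist (p₁.getVert i) (p₂.getVert i) ∧
          X.dist (p₁.getVert i) (p₂.getVert i) ≤ m)).card
      ≤ m * (m * (k * ∏ i ∈ Finset.Icc 2 (2 * m + 1), (i * k + 1))) := by
  classical
  obtain ⟨hconn, hgeod⟩ := hX
  have hch₁ : IsChainFn X p₁.getVert n := by
    intro i hi
    exact p₁.adj_getVert_succ (by omega)
  have hch₂ : IsChainFn X p₂.getVert n := by
    intro i hi
    exact p₂.adj_getVert_succ (by omega)
  have hg₂ : ∀ i j, i ≤ j → j ≤ n → X.dist (p₂.getVert i) (p₂.getVert j) = j - i := by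
    intro i j hij hj
    exact geodesic_getVert_dist hconn p₂ hgeo₂ hij (by omega)
  set S := (Finset.range (n + 1)).filter
      (fun i => 1 ≤ X.dist (p₁.getVert i) (p₂.getVert i) ∧
        X.dist (p₁.getVert i) (p₂.getVert i) ≤ m) with hSdef
  have hsub : S ⊆ (Finset.Icc 1 m).biUnion
      (fun d => S.filter (fun i => X.dist (p₁.getVert i) (p₂.getVert i) = d)) := by
    intro i hi
    have hi' := hi
    rw [hSdef, Finset.mem_filter] at hi'
    refine Finset.mem_biUnion.2 ⟨X.dist (p₁.getVert i) (p₂.getVert i), ?_, ?_⟩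
    · rw [Finset.mem_Icc]
      exact hi'.2
    · rw [Finset.mem_filter]
      exact ⟨hi, rfl⟩
  have hpieces : ∀ d ∈ Finset.Icc 1 m,
      (S.filter (fun i => X.dist (p₁.getVert i) (p₂.getVert i) = d)).card ≤ BB k d (2*d) := by
    intro d hdm
    rw [Finset.mem_Icc] at hdm
    refine P_lemma hconn hgeod p₁.getVert p₂.getVert n d hdm.1 hch₁ hch₂ hg₂ hdisj (2*d) _
      ?_ ?_
    · intro t ht
      rw [Finset.mem_filter, hSdef, Finset.mem_filter, Finset.mem_range] at ht
      exact ⟨by omega, ht.2⟩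
    · intro a ha b hb hab
      rw [Finset.mem_filter, hSdef, Finset.mem_filter, Finset.mem_range] at ha hb
      have hbn : b ≤ n := by omega
      have h1 : X.dist (p₂.getVert a) (p₂.getVert b) = b - a := hg₂ a b (by omega) hbn
      have htri : X.dist (p₂.getVert a) (p₂.getVert b) ≤
          X.dist (p₂.getVert a) (p₁.getVert a) + X.dist (p₁.getVert a) (p₂.getVert b) :=
        hconn.dist_triangle
      have hcomm : X.dist (p₂.getVert a) (p₁.getVert a)
          = X.dist (p₁.getVert a) (p₂.getVert a) := SimpleGraph.dist_comm
      have had : X.dist (p₁.getVert a) (p₂.getVert a) = d := ha.2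
      omega
  calc S.card
      ≤ ((Finset.Icc 1 m).biUnion
          (fun d => S.filter (fun i => X.dist (p₁.getVert i) (p₂.getVert i) = d))).card :=
        Finset.card_le_card hsub
    _ ≤ ∑ d ∈ Finset.Icc 1 m,
          (S.filter (fun i => X.dist (p₁.getVert i) (p₂.getVert i) = d)).card :=
        Finset.card_biUnion_le
    _ ≤ ∑ d ∈ Finset.Icc 1 m, BB k d (2*d) := Finset.sum_le_sum hpieces
    _ ≤ ∑ _d ∈ Finset.Icc 1 m, ((1+k)^(m+1) * ∏ i ∈ Finset.Ioc 1 (m+1), (1 + k * i)) := by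
        refine Finset.sum_le_sum (fun d hdm => ?_)
        rw [Finset.mem_Icc] at hdm
        exact BB_final k d m hdm.1 hdm.2
    _ = m * ((1+k)^(m+1) * ∏ i ∈ Finset.Ioc 1 (m+1), (1 + k * i)) := by
        rw [Finset.sum_const, Nat.card_Icc, smul_eq_mul]
        congr 1
    _ ≤ m * (m * (k * ∏ i ∈ Finset.Icc 2 (2 * m + 1), (i * k + 1))) :=
        Nat.mul_le_mul_left m (Phi_le k m hk hm)
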